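/- Suppose A₀,…,A₅ are (0,1)-matrices forming an association scheme whose eigenmatrices equal those of the 5-class MUBH scheme with parameters n, m. Setting G = A₀ + (1/2n)A₃ + (1/2n)A₄ − (1/2n)A₅, one has G² = (m+1)·G. -/
import Mathlib


open Matrix BigOperators

/-- The first eigenmatrix `P` of the 5-class scheme of mutually unbiased
Bush-type Hadamard matrices of order `4n²` (Remark 1(2) of the paper). -/
def eigP (n m : ℕ) : Matrix (Fin 6) (Fin 6) ℝ :=
  !![1, 2*n - 1, 2*n*(2*n - 1), 2*n*m, n*(2*n - 1)*m, n*(2*n - 1)*m;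
     1, -1, 0, 0, n*m, -(n*m);
     1, 2*n - 1, -(2*n), 2*n*m, -(n*m), -(n*m);
     1, 2*n - 1, -(2*n), -(2*n), n, n;
     1, -1, 0, 0, -n, n;
     1, 2*n - 1, 2*n*(2*n - 1), -(2*n), -(n*(2*n - 1)), -(n*(2*n - 1))]


private lemma cons_val_five' {α : Type*} {m : ℕ} (x : α) (u : Fin (m+5) → α) :
    Matrix.vecCons x u 5 = Matrix.vecHead (Matrix.vecTail (Matrix.vecTail (Matrix.vecTail (Matrix.vecTail u)))) :=
  rfl

/-- If `A₀, …, A₅` is an association scheme whose first eigenmatrix equals that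
of the 5-class MUBH scheme with parameters `n, m`, then
`G = A₀ + (A₃ + A₄ − A₅)/(2n)` satisfies `G² = (m+1)·G`. -/
theorem scheme_G_idempotent (n m : ℕ) (hn : 0 < n)
    (A : Fin 6 → Matrix (Fin ((m+1) * (4*n^2))) (Fin ((m+1) * (4*n^2))) ℝ)
    (hA01 : ∀ i x y, A i x y = 0 ∨ A i x y = 1)
    (hA0 : A 0 = 1)
    (hsym : ∀ i, (A i)ᵀ = A i)
    (hsum : ∑ i, A i = Matrix.of (fun _ _ : Fin ((m+1) * (4*n^2)) => (1 : ℝ)))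
    (E : Fin 6 → Matrix (Fin ((m+1) * (4*n^2))) (Fin ((m+1) * (4*n^2))) ℝ)
    (hidem : ∀ i, E i * E i = E i)
    (horth : ∀ i j, i ≠ j → E i * E j = 0)
    (hEsum : ∑ i, E i = 1)
    (hAE : ∀ j, A j = ∑ i, eigP n m i j • E i) :
    (A 0 + (2 * (n : ℝ))⁻¹ • (A 3 + A 4 - A 5)) *
      (A 0 + (2 * (n : ℝ))⁻¹ • (A 3 + A 4 - A 5)) =
    ((m : ℝ) + 1) • (A 0 + (2 * (n : ℝ))⁻¹ • (A 3 + A 4 - A 5)) := by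
  have hn' : (2 * (n : ℝ)) ≠ 0 := by positivity
  have hG : A 0 + (2 * (n : ℝ))⁻¹ • (A 3 + A 4 - A 5)
      = ((m : ℝ) + 1) • (E 0 + E 1 + E 2) := by
    rw [hAE 0, hAE 3, hAE 4, hAE 5]
    simp only [Fin.sum_univ_six, eigP, Matrix.cons_val', Matrix.cons_val_zero,
      Matrix.cons_val_one, Matrix.head_cons, Matrix.empty_val',
      Matrix.cons_val_fin_one, Matrix.head_fin_const, Matrix.of_apply,
      Matrix.cons_val_two, Matrix.cons_val_three, Matrix.cons_val_four, cons_val_five', Matrix.head_cons, Matrix.tail_cons]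
    ext x y
    simp only [Matrix.add_apply, Matrix.sub_apply, Matrix.smul_apply, smul_eq_mul]
    field_simp
    ring
  rw [hG]
  rw [Matrix.smul_mul, Matrix.mul_smul, smul_smul]
  have hF : (E 0 + E 1 + E 2) * (E 0 + E 1 + E 2) = E 0 + E 1 + E 2 := by
    have h01 := horth 0 1 (by decide)
    have h02 := horth 0 2 (by decide)
    have h10 := horth 1 0 (by decide)
    have h12 := horth 1 2 (by decide)
    have h20 := horth 2 0 (by decide)
    have h21 := horth 2 1 (by decide)
    simp only [add_mul, mul_add, hidem, h01, h02, h10, h12, h20, h21, add_zero, zero_add]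
  rw [hF, smul_smul]
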